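/- Assume additionally that there is an element ρ ∈ V with 2·B(α_j, ρ) = B(α_j, α_j) for every j = 1,…,m. Then for every t ∈ ℂ with t ≠ z_i for all i and t ≠ w_j for all j, one has (1/2)·B(u(t), u(t)) + B(ρ, u′(t)) = Σ_{i=1}^N (1/2)·B(λ_i, λ_i + 2ρ)·(t − z_i)^{−2} + Σ_{i=1}^N F_i·(t − z_i)^{−1} + Σ_{j=1}^m G_j·(t − w_j)^{−1}. (This is the partial-fraction identity of Theorem 4.4: h∨ times the coefficient of p₁ in any quasi-canonical form of the affine oper underlying the Miura oper d + (p₋₁ + u(z))dz equals the left-hand side; its double-pole coefficients are ½(λ_i|λ_i + 2ρ) and its residues are the partial derivatives ∂Φ/∂z_i = F_i and ∂Φ/∂w_j = G_j of the master function.) -/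

import Mathlib

open Finset

lemma erase_sum_ite {n : ℕ} (i : Fin n) (g : Fin n → ℂ) :
    ∑ k ∈ univ.erase i, g k = ∑ k, if k = i then 0 else g k := by
  have h1 : ∑ k ∈ univ.erase i, (if k = i then 0 else g k)
      = ∑ k ∈ univ.erase i, g k :=
    Finset.sum_congr rfl (fun k hk => if_neg (Finset.ne_of_mem_erase hk))
  rw [← Finset.sum_erase_add univ _ (Finset.mem_univ i), h1, if_pos rfl, add_zero]

lemma sum_erase_swap {n : ℕ} (h : Fin n → Fin n → ℂ) :
    ∑ i, ∑ k ∈ univ.erase i, h k i = ∑ i, ∑ k ∈ univ.erase i, h i k := by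
  calc ∑ i, ∑ k ∈ univ.erase i, h k i
      = ∑ i, ∑ k, if k = i then 0 else h k i := by
        exact Finset.sum_congr rfl (fun i _ => erase_sum_ite i _)
    _ = ∑ k, ∑ i, if k = i then 0 else h k i := Finset.sum_comm
    _ = ∑ k, ∑ i, if i = k then 0 else h k i := by
        refine Finset.sum_congr rfl (fun k _ => Finset.sum_congr rfl (fun i _ => ?_))
        simp [eq_comm]
    _ = ∑ i, ∑ k ∈ univ.erase i, h i k := by
        exact Finset.sum_congr rfl (fun k _ => (erase_sum_ite k _).symm)

lemma bilin_sum_sum {V : Type*} [AddCommGroup V] [Module ℂ V]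
    (B : V →ₗ[ℂ] V →ₗ[ℂ] ℂ) {n p : ℕ}
    (x : Fin n → ℂ) (v : Fin n → V) (y : Fin p → ℂ) (vv : Fin p → V) :
    B (∑ i, x i • v i) (∑ j, y j • vv j) = ∑ i, ∑ j, (x i * y j) * B (v i) (vv j) := by
  simp only [map_sum, map_smul, LinearMap.sum_apply, LinearMap.smul_apply, smul_eq_mul]
  simp only [Finset.mul_sum]
  rw [Finset.sum_comm]
  exact Finset.sum_congr rfl (fun i _ => Finset.sum_congr rfl (fun j _ => by ring))

lemma sym_double_sum {n : ℕ} (x p : Fin n → ℂ) (c : Fin n → Fin n → ℂ)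
    (hc : ∀ i k, c i k = c k i)
    (hx : ∀ i k, i ≠ k → x i * x k = (p i - p k)⁻¹ * (x i - x k)) :
    ∑ i, ∑ k, (x i * x k) * c i k
      = ∑ i, (x i * x i) * c i i
        + 2 * ∑ i, x i * ∑ k ∈ univ.erase i, c i k / (p i - p k) := by
  have split : ∀ i, ∑ k, (x i * x k) * c i k
      = ∑ k ∈ univ.erase i, (x i * x k) * c i k + (x i * x i) * c i i := by
    intro i
    rw [Finset.sum_erase_add univ _ (Finset.mem_univ i)]
  have key : ∑ i, ∑ k ∈ univ.erase i, (x i * x k) * c i k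
      = 2 * ∑ i, x i * ∑ k ∈ univ.erase i, c i k / (p i - p k) := by
    have step : ∀ i, ∀ k ∈ univ.erase i, (x i * x k) * c i k
        = (x i * c i k * (p i - p k)⁻¹) + (x k * c k i * (p k - p i)⁻¹) := by
      intro i k hk
      have hik : i ≠ k := (Finset.ne_of_mem_erase hk).symm
      rw [hx i k hik, hc i k]
      have : (p k - p i)⁻¹ = -(p i - p k)⁻¹ := by
        rw [← neg_sub (p i) (p k), inv_neg]
      rw [this]
      ring
    calc ∑ i, ∑ k ∈ univ.erase i, (x i * x k) * c i k
        = ∑ i, ∑ k ∈ univ.erase i,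
            ((x i * c i k * (p i - p k)⁻¹) + (x k * c k i * (p k - p i)⁻¹)) := by
          exact Finset.sum_congr rfl (fun i _ => Finset.sum_congr rfl (step i))
      _ = ∑ i, ∑ k ∈ univ.erase i, (x i * c i k * (p i - p k)⁻¹)
          + ∑ i, ∑ k ∈ univ.erase i, (x k * c k i * (p k - p i)⁻¹) := by
          rw [← Finset.sum_add_distrib]
          exact Finset.sum_congr rfl (fun i _ => Finset.sum_add_distrib)
      _ = 2 * ∑ i, ∑ k ∈ univ.erase i, (x i * c i k * (p i - p k)⁻¹) := by
          rw [sum_erase_swap (fun i k => x i * c i k * (p i - p k)⁻¹)]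
          ring
      _ = 2 * ∑ i, x i * ∑ k ∈ univ.erase i, c i k / (p i - p k) := by
          congr 1
          refine Finset.sum_congr rfl (fun i _ => ?_)
          rw [Finset.mul_sum]
          exact Finset.sum_congr rfl (fun k _ => by rw [div_eq_mul_inv]; ring)
  calc ∑ i, ∑ k, (x i * x k) * c i k
      = ∑ i, (∑ k ∈ univ.erase i, (x i * x k) * c i k + (x i * x i) * c i i) := by
        exact Finset.sum_congr rfl (fun i _ => split i)
    _ = ∑ i, ∑ k ∈ univ.erase i, (x i * x k) * c i k + ∑ i, (x i * x i) * c i i :=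
        Finset.sum_add_distrib
    _ = _ := by rw [key]; ring

theorem statement0 {V : Type*} [AddCommGroup V] [Module ℂ V]
    (B : V →ₗ[ℂ] V →ₗ[ℂ] ℂ) (hBsymm : ∀ x y, B x y = B y x)
    (N m : ℕ) (lam : Fin N → V) (alp : Fin m → V)
    (z : Fin N → ℂ) (w : Fin m → ℂ)
    (hz : Function.Injective z) (hw : Function.Injective w)
    (hzw : ∀ i j, z i ≠ w j)
    (ρ : V) (hρ : ∀ j, 2 * B (alp j) ρ = B (alp j) (alp j))
    (u u' : ℂ → V)
    (hu : ∀ t, u t = -∑ i, (t - z i)⁻¹ • lam i + ∑ j, (t - w j)⁻¹ • alp j)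
    (hu' : ∀ t, u' t = ∑ i, ((t - z i) ^ 2)⁻¹ • lam i - ∑ j, ((t - w j) ^ 2)⁻¹ • alp j)
    (F : Fin N → ℂ)
    (hF : ∀ i, F i = ∑ k ∈ univ.erase i, B (lam i) (lam k) / (z i - z k)
        - ∑ j, B (lam i) (alp j) / (z i - w j))
    (G : Fin m → ℂ)
    (hG : ∀ j, G j = -∑ i, B (lam i) (alp j) / (w j - z i)
        + ∑ k ∈ univ.erase j, B (alp k) (alp j) / (w j - w k)) :
    ∀ t : ℂ, (∀ i, t ≠ z i) → (∀ j, t ≠ w j) →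
      (1/2 : ℂ) * B (u t) (u t) + B ρ (u' t)
        = ∑ i, (1/2 : ℂ) * B (lam i) (lam i + (2 : ℂ) • ρ) * ((t - z i) ^ 2)⁻¹
          + ∑ i, F i * (t - z i)⁻¹
          + ∑ j, G j * (t - w j)⁻¹ := by
  intro t htz htw
  have hzt : ∀ i, t - z i ≠ 0 := fun i => sub_ne_zero.2 (htz i)
  have hwt : ∀ j, t - w j ≠ 0 := fun j => sub_ne_zero.2 (htw j)
  have hzz : ∀ i k, i ≠ k → z i - z k ≠ 0 :=
    fun i k h => sub_ne_zero.2 (fun e => h (hz e))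
  have hww : ∀ j k, j ≠ k → w j - w k ≠ 0 :=
    fun j k h => sub_ne_zero.2 (fun e => h (hw e))
  have hzwne : ∀ i j, z i - w j ≠ 0 := fun i j => sub_ne_zero.2 (hzw i j)
  -- partial fraction identities
  have pfzz : ∀ i k, i ≠ k →
      (t - z i)⁻¹ * (t - z k)⁻¹ = (z i - z k)⁻¹ * ((t - z i)⁻¹ - (t - z k)⁻¹) := by
    intro i k h
    have h1 := hzt i; have h2 := hzt k; have h3 := hzz i k h
    field_simp
    ring
  have pfww : ∀ j k, j ≠ k →
      (t - w j)⁻¹ * (t - w k)⁻¹ = (w j - w k)⁻¹ * ((t - w j)⁻¹ - (t - w k)⁻¹) := by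
    intro j k h
    have h1 := hwt j; have h2 := hwt k; have h3 := hww j k h
    field_simp
    ring
  have pfzw : ∀ i j,
      (t - z i)⁻¹ * (t - w j)⁻¹ = (z i - w j)⁻¹ * ((t - z i)⁻¹ - (t - w j)⁻¹) := by
    intro i j
    have h1 := hzt i; have h2 := hwt j; have h3 := hzwne i j
    field_simp
    ring
  -- expansion of B(u t, u t)
  have expand : B (u t) (u t)
      = (∑ i, ∑ k, ((t - z i)⁻¹ * (t - z k)⁻¹) * B (lam i) (lam k))
        - 2 * (∑ i, ∑ j, ((t - z i)⁻¹ * (t - w j)⁻¹) * B (lam i) (alp j))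
        + (∑ j, ∑ k, ((t - w j)⁻¹ * (t - w k)⁻¹) * B (alp j) (alp k)) := by
    rw [hu t, neg_add_eq_sub]
    simp only [map_sub, LinearMap.sub_apply]
    rw [bilin_sum_sum, bilin_sum_sum, bilin_sum_sum, bilin_sum_sum]
    have hsw : ∑ j, ∑ i, ((t - w j)⁻¹ * (t - z i)⁻¹) * B (alp j) (lam i)
        = ∑ i, ∑ j, ((t - z i)⁻¹ * (t - w j)⁻¹) * B (lam i) (alp j) := by
      rw [Finset.sum_comm]
      exact Finset.sum_congr rfl (fun i _ => Finset.sum_congr rfl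
        (fun j _ => by rw [hBsymm]; ring))
    rw [hsw]
    ring
  -- the λλ double sum
  have P_eq : ∑ i, ∑ k, ((t - z i)⁻¹ * (t - z k)⁻¹) * B (lam i) (lam k)
      = ∑ i, ((t - z i) ^ 2)⁻¹ * B (lam i) (lam i)
        + 2 * ∑ i, (t - z i)⁻¹ * ∑ k ∈ univ.erase i, B (lam i) (lam k) / (z i - z k) := by
    rw [sym_double_sum (fun i => (t - z i)⁻¹) z (fun i k => B (lam i) (lam k))
      (fun i k => hBsymm _ _) pfzz]
    congr 1
    refine Finset.sum_congr rfl (fun i _ => ?_)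
    rw [← mul_inv, ← sq]
  -- the αα double sum
  have R_eq : ∑ j, ∑ k, ((t - w j)⁻¹ * (t - w k)⁻¹) * B (alp j) (alp k)
      = ∑ j, ((t - w j) ^ 2)⁻¹ * B (alp j) (alp j)
        + 2 * ∑ j, (t - w j)⁻¹ * ∑ k ∈ univ.erase j, B (alp j) (alp k) / (w j - w k) := by
    rw [sym_double_sum (fun j => (t - w j)⁻¹) w (fun j k => B (alp j) (alp k))
      (fun j k => hBsymm _ _) pfww]
    congr 1
    refine Finset.sum_congr rfl (fun j _ => ?_)
    rw [← mul_inv, ← sq]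
  -- the λα cross sum
  have Q_eq : ∑ i, ∑ j, ((t - z i)⁻¹ * (t - w j)⁻¹) * B (lam i) (alp j)
      = ∑ i, (t - z i)⁻¹ * ∑ j, B (lam i) (alp j) / (z i - w j)
        - ∑ j, (t - w j)⁻¹ * ∑ i, B (lam i) (alp j) / (z i - w j) := by
    have step : ∀ i j, ((t - z i)⁻¹ * (t - w j)⁻¹) * B (lam i) (alp j)
        = (t - z i)⁻¹ * (B (lam i) (alp j) / (z i - w j))
          - (t - w j)⁻¹ * (B (lam i) (alp j) / (z i - w j)) := by
      intro i j
      rw [pfzw i j, div_eq_mul_inv]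
      ring
    calc ∑ i, ∑ j, ((t - z i)⁻¹ * (t - w j)⁻¹) * B (lam i) (alp j)
        = ∑ i, ∑ j, ((t - z i)⁻¹ * (B (lam i) (alp j) / (z i - w j))
            - (t - w j)⁻¹ * (B (lam i) (alp j) / (z i - w j))) :=
          Finset.sum_congr rfl (fun i _ => Finset.sum_congr rfl (fun j _ => step i j))
      _ = ∑ i, ∑ j, (t - z i)⁻¹ * (B (lam i) (alp j) / (z i - w j))
          - ∑ i, ∑ j, (t - w j)⁻¹ * (B (lam i) (alp j) / (z i - w j)) := by
          rw [← Finset.sum_sub_distrib]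
          exact Finset.sum_congr rfl (fun i _ => Finset.sum_sub_distrib _ _)
      _ = ∑ i, (t - z i)⁻¹ * ∑ j, B (lam i) (alp j) / (z i - w j)
          - ∑ j, (t - w j)⁻¹ * ∑ i, B (lam i) (alp j) / (z i - w j) := by
          rw [Finset.sum_comm (f := fun i j => (t - w j)⁻¹ * (B (lam i) (alp j) / (z i - w j)))]
          congr 1
          · exact Finset.sum_congr rfl (fun i _ => (Finset.mul_sum _ _ _).symm)
          · exact Finset.sum_congr rfl (fun j _ => (Finset.mul_sum _ _ _).symm)
  -- B(ρ, u'(t))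
  have Su'_eq : B ρ (u' t)
      = ∑ i, ((t - z i) ^ 2)⁻¹ * B ρ (lam i) - ∑ j, ((t - w j) ^ 2)⁻¹ * B ρ (alp j) := by
    rw [hu' t]
    simp only [map_sub, map_sum, map_smul, smul_eq_mul]
  -- cancellation from hρ
  have hcancel : ∑ j, ((t - w j) ^ 2)⁻¹ * B (alp j) (alp j)
      = 2 * ∑ j, ((t - w j) ^ 2)⁻¹ * B ρ (alp j) := by
    rw [Finset.mul_sum]
    refine Finset.sum_congr rfl (fun j _ => ?_)
    rw [← hρ j, hBsymm ρ (alp j)]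
    ring
  -- RHS pieces
  have hRHS1 : ∑ i, (1/2 : ℂ) * B (lam i) (lam i + (2 : ℂ) • ρ) * ((t - z i) ^ 2)⁻¹
      = (1/2 : ℂ) * ∑ i, ((t - z i) ^ 2)⁻¹ * B (lam i) (lam i)
        + ∑ i, ((t - z i) ^ 2)⁻¹ * B ρ (lam i) := by
    rw [Finset.mul_sum, ← Finset.sum_add_distrib]
    refine Finset.sum_congr rfl (fun i _ => ?_)
    rw [map_add, map_smul, smul_eq_mul, hBsymm (lam i) ρ]
    ring
  have hRHS2 : ∑ i, F i * (t - z i)⁻¹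
      = ∑ i, (t - z i)⁻¹ * ∑ k ∈ univ.erase i, B (lam i) (lam k) / (z i - z k)
        - ∑ i, (t - z i)⁻¹ * ∑ j, B (lam i) (alp j) / (z i - w j) := by
    rw [← Finset.sum_sub_distrib]
    refine Finset.sum_congr rfl (fun i _ => ?_)
    rw [hF i]
    ring
  have hRHS3 : ∑ j, G j * (t - w j)⁻¹
      = ∑ j, (t - w j)⁻¹ * ∑ i, B (lam i) (alp j) / (z i - w j)
        + ∑ j, (t - w j)⁻¹ * ∑ k ∈ univ.erase j, B (alp j) (alp k) / (w j - w k) := by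
    rw [← Finset.sum_add_distrib]
    refine Finset.sum_congr rfl (fun j _ => ?_)
    rw [hG j]
    have e1 : ∑ i, B (lam i) (alp j) / (w j - z i)
        = -∑ i, B (lam i) (alp j) / (z i - w j) := by
      rw [← Finset.sum_neg_distrib]
      refine Finset.sum_congr rfl (fun i _ => ?_)
      rw [← div_neg, neg_sub]
    have e2 : ∑ k ∈ univ.erase j, B (alp k) (alp j) / (w j - w k)
        = ∑ k ∈ univ.erase j, B (alp j) (alp k) / (w j - w k) :=
      Finset.sum_congr rfl (fun k _ => by rw [hBsymm])
    rw [e1, e2]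
    ring
  rw [expand, P_eq, Q_eq, R_eq, Su'_eq, hRHS1, hRHS2, hRHS3]
  linear_combination (1/2 : ℂ) * hcancel
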